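/- Let K be a differential field with derivation D, let k ⊆ K be a subfield with K/k a finite Galois extension with group G = Gal(K/k), and suppose every σ ∈ G commutes with D. Let u ∈ K and let f : G → Kˣ satisfy σ(u) − u = logD f(σ) for every σ ∈ G. Define c : G × G → Kˣ by c(σ,τ) := f(στ)·f(σ)⁻¹·σ(f(τ))⁻¹. Then every value of c is a constant (D(c(σ,τ)) = 0 for all σ,τ ∈ G), and c satisfies the 2-cocycle identity c(σ,τ)·c(στ,ρ) = σ(c(τ,ρ))·c(σ,τρ) for all σ,τ,ρ ∈ G. -/

import Mathlib

/-- Let `K` be a differential field with derivation `D`, `k ⊆ K` a subfield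
with `K/k` finite Galois with group `G`, each `σ ∈ G` commuting with `D`.  Let `u ∈ K` and
`f : G → Kˣ` satisfy `σ(u) − u = logD f(σ)`.  Then `c(σ,τ) := f(στ)·f(σ)⁻¹·σ(f(τ))⁻¹`
takes constant values and satisfies the 2-cocycle identity
`c(σ,τ)·c(στ,ρ) = σ(c(τ,ρ))·c(σ,τρ)`. -/
theorem stmt2 (k K : Type*) [Field k] [Field K] [Algebra k K]
    [FiniteDimensional k K] [IsGalois k K]
    (D : K → K)
    (hDadd : ∀ x y : K, D (x + y) = D x + D y)
    (hDmul : ∀ x y : K, D (x * y) = x * D y + D x * y)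
    (hcomm : ∀ (σ : K ≃ₐ[k] K) (x : K), σ (D x) = D (σ x))
    (u : K) (f : (K ≃ₐ[k] K) → Kˣ)
    (hf : ∀ σ : K ≃ₐ[k] K, σ u - u = D (f σ : K) / (f σ : K))
    (c : (K ≃ₐ[k] K) → (K ≃ₐ[k] K) → Kˣ)
    (hcdef : ∀ σ τ : K ≃ₐ[k] K, (c σ τ : K) = (f (σ * τ) : K) * (f σ : K)⁻¹ * (σ (f τ : K))⁻¹) :
    (∀ σ τ : K ≃ₐ[k] K, D (c σ τ : K) = 0) ∧
      (∀ σ τ ρ : K ≃ₐ[k] K,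
        (c σ τ : K) * (c (σ * τ) ρ : K) = σ (c τ ρ : K) * (c σ (τ * ρ) : K)) := by
  have hD1 : D 1 = 0 := by
    simpa using hDmul 1 1
  have hDinv : ∀ x : K, x ≠ 0 → D x⁻¹ = -(D x) / (x * x) := by
    intro x hx
    have h : x * D x⁻¹ + D x * x⁻¹ = 0 := by rw [← hDmul, mul_inv_cancel₀ hx, hD1]
    have hx1 : x * x⁻¹ = 1 := mul_inv_cancel₀ hx
    rw [eq_div_iff (mul_ne_zero hx hx)]
    linear_combination x * h - D x * hx1
  -- logarithmic derivative
  set l : K → K := fun x => D x / x with hl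
  have lmul : ∀ x y : K, x ≠ 0 → y ≠ 0 → l (x * y) = l x + l y := by
    intro x y hx hy
    simp only [hl, hDmul]
    field_simp
    ring
  have linv : ∀ x : K, x ≠ 0 → l x⁻¹ = -(l x) := by
    intro x hx
    simp only [hl, hDinv x hx]
    field_simp
  have lsig : ∀ (σ : K ≃ₐ[k] K) (x : K), l (σ x) = σ (l x) := by
    intro σ x
    simp only [hl, ← hcomm σ x, map_div₀]
  constructor
  · intro σ τ
    have hc0 : (c σ τ : K) ≠ 0 := (c σ τ).ne_zero
    have hfστ : ((f (σ * τ) : K)) ≠ 0 := (f (σ * τ)).ne_zero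
    have hfσ : ((f σ : K)) ≠ 0 := (f σ).ne_zero
    have hfτσ : σ (f τ : K) ≠ 0 := by
      simp [map_ne_zero]
    have hlc : l (c σ τ : K) = 0 := by
      rw [hcdef σ τ, lmul _ _ (mul_ne_zero hfστ (inv_ne_zero hfσ)) (inv_ne_zero hfτσ),
        lmul _ _ hfστ (inv_ne_zero hfσ), linv _ hfσ, linv _ hfτσ, lsig]
      have h1 : l (f (σ * τ) : K) = (σ * τ) u - u := (hf (σ * τ)).symm
      have h2 : l (f σ : K) = σ u - u := (hf σ).symm
      have h3 : l (f τ : K) = τ u - u := (hf τ).symm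
      rw [h1, h2, h3, map_sub, AlgEquiv.mul_apply]
      ring
    have : D (c σ τ : K) / (c σ τ : K) = 0 := hlc
    field_simp at this
    rwa [mul_zero] at this
  · intro σ τ ρ
    have hfσ : ((f σ : K)) ≠ 0 := (f σ).ne_zero
    have hτρ : σ (f (τ * ρ) : K) ≠ 0 := by simp [map_ne_zero]
    have hτ : σ (f τ : K) ≠ 0 := by simp [map_ne_zero]
    have hρ : σ (τ (f ρ : K)) ≠ 0 := by simp [map_ne_zero]
    have hστ : ((f (σ * τ) : K)) ≠ 0 := (f (σ * τ)).ne_zero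
    rw [hcdef, hcdef, hcdef, hcdef, map_mul, map_mul, map_inv₀, map_inv₀,
      mul_assoc σ τ ρ, ← AlgEquiv.mul_apply σ τ (f ρ : K)]
    field_simp
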